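/- In the ring of Gaussian integers ℤ[i], every ideal coprime to 2 has a unique generator congruent to 1 modulo (1+i)³. -/

import Mathlib

lemma pi3_dvd_iff (z : GaussianInt) :
    ((⟨1, 1⟩ : GaussianInt)) ^ 3 ∣ z ↔ (4 ∣ z.re + z.im ∧ 4 ∣ z.re - z.im) := by
  have h3 : ((⟨1,1⟩ : GaussianInt))^3 = ⟨-2,2⟩ := by decide
  rw [h3]
  constructor
  · rintro ⟨w, rfl⟩
    constructor
    · exact ⟨-w.im, by simp [Zsqrtd.re_mul, Zsqrtd.im_mul]; ring⟩
    · exact ⟨-w.re, by simp [Zsqrtd.re_mul, Zsqrtd.im_mul]; ring⟩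
  · rintro ⟨⟨x, hx⟩, ⟨y, hy⟩⟩
    refine ⟨⟨-y, -x⟩, ?_⟩
    rw [Zsqrtd.ext_iff]
    constructor <;> simp [Zsqrtd.re_mul, Zsqrtd.im_mul] <;> omega

lemma pi_not_unit : ¬ IsUnit ((⟨1,1⟩ : GaussianInt)) := by
  intro h
  obtain ⟨v, hv⟩ := h.exists_right_inv
  rw [Zsqrtd.ext_iff] at hv
  simp [Zsqrtd.re_mul, Zsqrtd.im_mul] at hv
  omega

lemma pi_dvd_two : ((⟨1,1⟩ : GaussianInt)) ∣ 2 := by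
  refine ⟨⟨1,-1⟩, ?_⟩; decide

lemma odd_parity {g : GaussianInt} (hg : IsCoprime g 2) : ¬ (2 ∣ g.re + g.im) := by
  intro ⟨k, hk⟩
  have hπg : ((⟨1,1⟩ : GaussianInt)) ∣ g := by
    refine ⟨⟨k, g.im - k⟩, ?_⟩
    rw [Zsqrtd.ext_iff]
    constructor <;> simp [Zsqrtd.re_mul, Zsqrtd.im_mul] <;> omega
  exact pi_not_unit (hg.isUnit_of_dvd' hπg pi_dvd_two)

lemma unit_eq_one {w : GaussianInt} (hw : IsUnit w)
    (h : ((⟨1,1⟩ : GaussianInt))^3 ∣ w - 1) : w = 1 := by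
  have hn : w.norm.natAbs = 1 := Zsqrtd.norm_eq_one_iff.mpr hw
  have h1 : w.norm = w.re * w.re + w.im * w.im := by rw [Zsqrtd.norm_def]; ring
  have hnorm : w.re * w.re + w.im * w.im = 1 := by
    have h2 := Int.natAbs_eq w.norm
    rw [hn] at h2
    push_cast at h2
    rcases h2 with h2 | h2
    · linarith
    · nlinarith [mul_self_nonneg w.re, mul_self_nonneg w.im]
  rw [pi3_dvd_iff] at h
  simp only [Zsqrtd.re_sub, Zsqrtd.im_sub, Zsqrtd.re_one, Zsqrtd.im_one] at h
  rw [Zsqrtd.ext_iff]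
  have hr : -1 ≤ w.re ∧ w.re ≤ 1 := by constructor <;> nlinarith
  have hi : -1 ≤ w.im ∧ w.im ≤ 1 := by constructor <;> nlinarith
  obtain ⟨hd1, hd2⟩ := h
  simp only [Zsqrtd.re_one, Zsqrtd.im_one]
  constructor <;> omega

theorem stmt_9 (I : Ideal GaussianInt)
    (hI : I ⊔ Ideal.span {(2 : GaussianInt)} = ⊤) :
    ∃! d : GaussianInt, Ideal.span {d} = I ∧ ((⟨1, 1⟩ : GaussianInt)) ^ 3 ∣ d - 1 := by
  obtain ⟨g, hg⟩ := (IsPrincipalIdealRing.principal I).principal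
  rw [Ideal.submodule_span_eq] at hg
  have hcop : IsCoprime g 2 := by
    rw [← Ideal.isCoprime_span_singleton_iff, Ideal.isCoprime_iff_sup_eq, ← hg]
    exact hI
  have hpar := odd_parity hcop
  have hkey : ∃ u : GaussianInt, IsUnit u ∧ ((⟨1,1⟩ : GaussianInt))^3 ∣ g * u - 1 := by
    by_cases h1 : 4 ∣ g.re + g.im - 1
    · by_cases h2 : 4 ∣ g.re - g.im - 1
      · refine ⟨1, isUnit_one, ?_⟩
        rw [pi3_dvd_iff]
        simp only [mul_one, Zsqrtd.re_sub, Zsqrtd.im_sub, Zsqrtd.re_one, Zsqrtd.im_one]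
        constructor <;> omega
      · refine ⟨⟨0,-1⟩, IsUnit.of_mul_eq_one ⟨0,1⟩ (by decide), ?_⟩
        rw [pi3_dvd_iff]
        simp only [Zsqrtd.re_sub, Zsqrtd.im_sub, Zsqrtd.re_one, Zsqrtd.im_one,
          Zsqrtd.re_mul, Zsqrtd.im_mul]
        constructor <;> · simp; omega
    · by_cases h2 : 4 ∣ g.re - g.im - 1
      · refine ⟨⟨0,1⟩, IsUnit.of_mul_eq_one ⟨0,-1⟩ (by decide), ?_⟩
        rw [pi3_dvd_iff]
        simp only [Zsqrtd.re_sub, Zsqrtd.im_sub, Zsqrtd.re_one, Zsqrtd.im_one,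
          Zsqrtd.re_mul, Zsqrtd.im_mul]
        constructor <;> · simp; omega
      · refine ⟨⟨-1,0⟩, IsUnit.of_mul_eq_one ⟨-1,0⟩ (by decide), ?_⟩
        rw [pi3_dvd_iff]
        simp only [Zsqrtd.re_sub, Zsqrtd.im_sub, Zsqrtd.re_one, Zsqrtd.im_one,
          Zsqrtd.re_mul, Zsqrtd.im_mul]
        constructor <;> · simp; omega
  obtain ⟨u, hu, hd3⟩ := hkey
  refine ⟨g * u, ⟨?_, hd3⟩, ?_⟩
  · rw [Ideal.span_singleton_mul_right_unit hu, hg]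
  · rintro y ⟨hy, hy3⟩
    have hass : Associated (g * u) y := by
      rw [← Ideal.span_singleton_eq_span_singleton, Ideal.span_singleton_mul_right_unit hu,
        ← hg]
      exact hy.symm
    obtain ⟨w, hw⟩ := hass
    have hco2 : IsCoprime (g * u) 2 := by
      refine IsCoprime.mul_left hcop ?_
      obtain ⟨v, hv⟩ := hu.exists_right_inv
      exact ⟨v, 0, by rw [zero_mul, add_zero, mul_comm]; exact hv⟩
    have hcoπ : IsCoprime (((⟨1,1⟩ : GaussianInt))^3) (g * u) :=
      ((hco2.of_isCoprime_of_dvd_right pi_dvd_two).pow_right).symm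
    have hsub : ((⟨1,1⟩ : GaussianInt))^3 ∣ (g * u) * ((w : GaussianInt) - 1) := by
      have : (g * u) * ((w : GaussianInt) - 1) = (y - 1) - (g * u - 1) := by
        rw [← hw]; ring
      rw [this]
      exact dvd_sub hy3 hd3
    have hw1 : (w : GaussianInt) = 1 := unit_eq_one w.isUnit (hcoπ.dvd_of_dvd_mul_left hsub)
    rw [← hw, hw1, mul_one]
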